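/- Let A be a 1-periodic Z-algebra, i.e. there is an isomorphism φ: A → A(1) of Z-algebras (where A(1)_{ij} = A_{i+1,j+1}). Then there exists a Z-graded ring B with B_n = A_{0,n} and multiplication b_i · b_j = b_i φ^i(b_j), and the map ψ: B̌ → A defined on B̌_{ij} = B_{j-i} = A_{0,j-i} by ψ = φ^i is an isomorphism of Z-algebras. In particular, every 1-periodic Z-algebra is of the form B̌ for a Z-graded ring B. -/

import Mathlib

/-- A ℤ-algebra: a (non-unital) ring `A = ⊕_{i,j ∈ ℤ} A_{ij}` with
`A_{ij}·A_{jk} ⊆ A_{ik}`, `A_{ij}·A_{kl} = 0` for `j ≠ k`, and local units `e_i ∈ A_{ii}`,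
presented by its components. -/
structure ZAlg where
  C : ℤ → ℤ → Type
  addgrp : ∀ i j, AddCommGroup (C i j)
  mul : ∀ {i j l : ℤ}, C i j → C j l → C i l
  e : ∀ i : ℤ, C i i
  mul_add : ∀ {i j l : ℤ} (a : C i j) (b c : C j l), mul a (b + c) = mul a b + mul a c
  add_mul : ∀ {i j l : ℤ} (a b : C i j) (c : C j l), mul (a + b) c = mul a c + mul b c
  mul_assoc : ∀ {i j l m : ℤ} (a : C i j) (b : C j l) (c : C l m),
    mul (mul a b) c = mul a (mul b c)
  e_mul : ∀ {i j : ℤ} (a : C i j), mul (e i) a = a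
  mul_e : ∀ {i j : ℤ} (a : C i j), mul a (e j) = a

attribute [instance] ZAlg.addgrp

/-- The shift `A(g)` of a ℤ-algebra, `A(g)_{ij} = A_{i+g, j+g}`. -/
def ZAlg.shift (A : ZAlg) (g : ℤ) : ZAlg where
  C i j := A.C (i + g) (j + g)
  addgrp _ _ := A.addgrp _ _
  mul a b := A.mul a b
  e i := A.e (i + g)
  mul_add a b c := A.mul_add a b c
  add_mul a b c := A.add_mul a b c
  mul_assoc a b c := A.mul_assoc a b c
  e_mul a := A.e_mul a
  mul_e a := A.mul_e a

/-- An isomorphism of ℤ-algebras. -/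
structure ZAlgIso (A B : ZAlg) where
  toEquiv : ∀ i j : ℤ, A.C i j ≃+ B.C i j
  map_mul : ∀ {i j l : ℤ} (a : A.C i j) (b : A.C j l),
    toEquiv i l (A.mul a b) = B.mul (toEquiv i j a) (toEquiv j l b)
  map_e : ∀ i : ℤ, toEquiv i i (A.e i) = B.e i

/-- A ℤ-graded ring, presented by its components; the coherence laws are stated with
`HEq` to avoid transports along `(i+j)+l = i+(j+l)` etc. -/
structure GrRingData where
  C : ℤ → Type
  addgrp : ∀ i, AddCommGroup (C i)
  mul : ∀ {i j : ℤ}, C i → C j → C (i + j)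
  one : C 0
  mul_add : ∀ {i j : ℤ} (a : C i) (b c : C j), mul a (b + c) = mul a b + mul a c
  add_mul : ∀ {i j : ℤ} (a b : C i) (c : C j), mul (a + b) c = mul a c + mul b c
  mul_assoc : ∀ {i j l : ℤ} (a : C i) (b : C j) (c : C l),
    HEq (mul (mul a b) c) (mul a (mul b c))
  one_mul : ∀ {i : ℤ} (a : C i), HEq (mul one a) a
  mul_one : ∀ {i : ℤ} (a : C i), HEq (mul a one) a

attribute [instance] GrRingData.addgrp

namespace GrRingData

variable (B : GrRingData)

private theorem cast_add {m n : ℤ} (h : m = n) (x y : B.C m) :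
    cast (congrArg B.C h) (x + y) = cast (congrArg B.C h) x + cast (congrArg B.C h) y := by
  subst h; rfl

private theorem heq_mul_left {m m' n : ℤ} (h : m = m') (x : B.C m) (y : B.C n) :
    HEq (B.mul (cast (congrArg B.C h) x) y) (B.mul x y) := by subst h; rfl

private theorem heq_mul_right {m n n' : ℤ} (h : n = n') (x : B.C m) (y : B.C n) :
    HEq (B.mul x (cast (congrArg B.C h) y)) (B.mul x y) := by subst h; rfl

/-- The ℤ-algebra `B̌` associated to a ℤ-graded ring `B`: `B̌_{ij} = B_{j-i}`. -/
def check (B : GrRingData) : ZAlg where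
  C i j := B.C (j - i)
  addgrp _ _ := B.addgrp _
  mul {i j l} a b := cast (congrArg B.C (show (j - i) + (l - j) = l - i by ring)) (B.mul a b)
  e i := cast (congrArg B.C (show (0 : ℤ) = i - i by ring)) B.one
  mul_add a b c := by
    beta_reduce
    rw [B.mul_add, B.cast_add]
    omega
  add_mul a b c := by
    beta_reduce
    rw [B.add_mul, B.cast_add]
    omega
  mul_assoc {i j l m} a b c := by
    beta_reduce
    have h1 := B.heq_mul_left (show (j - i) + (l - j) = l - i by ring) (B.mul a b) c
    have h2 := B.heq_mul_right (show (l - j) + (m - l) = m - j by ring) a (B.mul b c)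
    exact eq_of_heq (((cast_heq _ _).trans h1).trans
      ((B.mul_assoc a b c).trans (h2.symm.trans (cast_heq _ _).symm)))
  e_mul {i j} a := by
    beta_reduce
    exact eq_of_heq ((cast_heq _ _).trans
      ((B.heq_mul_left (show (0 : ℤ) = i - i by ring) B.one a).trans (B.one_mul a)))
  mul_e {i j} a := by
    beta_reduce
    exact eq_of_heq ((cast_heq _ _).trans
      ((B.heq_mul_right (show (0 : ℤ) = j - j by ring) a B.one).trans (B.mul_one a)))

end GrRingData

attribute [reducible] ZAlg.shift

namespace ZP

variable (A : ZAlg) (φ : ZAlgIso A (A.shift 1))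

/-- recast along index equalities -/
def rc {i j i' j' : ℤ} (hi : i = i') (hj : j = j') (a : A.C i j) : A.C i' j' :=
  cast (by rw [hi, hj]) a

theorem rc_rfl {i j : ℤ} (hi : i = i) (hj : j = j) (a : A.C i j) : rc A hi hj a = a := rfl

theorem heq_rc {i j i' j' : ℤ} (hi : i = i') (hj : j = j') (a : A.C i j) :
    HEq (rc A hi hj a) a := by subst hi hj; rfl

theorem rc_rc {i j i' j' i'' j'' : ℤ} (p : i' = i'') (q : j' = j'') (hi : i = i') (hj : j = j')
    (a : A.C i j) : rc A p q (rc A hi hj a) = rc A (hi.trans p) (hj.trans q) a := by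
  subst p q hi hj; rfl

theorem rc_add {i j i' j' : ℤ} (hi : i = i') (hj : j = j') (a b : A.C i j) :
    rc A hi hj (a + b) = rc A hi hj a + rc A hi hj b := by subst hi hj; rfl

theorem rc_mul {i j l i' j' l' : ℤ} (hi : i = i') (hj hj2 : j = j') (hl : l = l')
    (a : A.C i j) (b : A.C j l) :
    A.mul (rc A hi hj a) (rc A hj2 hl b) = rc A hi hl (A.mul a b) := by
  subst hi hj hl; rfl

theorem rc_e {i i' : ℤ} (h h' : i = i') : rc A h h' (A.e i) = A.e i' := by subst h; rfl

theorem mul_rc_right {i j l l' : ℤ} (q : j = j) (p : l = l') (x : A.C i j) (y : A.C j l) :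
    A.mul x (rc A q p y) = rc A rfl p (A.mul x y) := by subst p; rfl

theorem rc_inj {i j i' j' : ℤ} (hi : i = i') (hj : j = j') {a b : A.C i j}
    (h : rc A hi hj a = rc A hi hj b) : a = b := by subst hi hj; exact h

variable {A}

theorem phi_rc {i j i' j' : ℤ} (hi : i = i') (hj : j = j') (a : A.C i j) :
    φ.toEquiv i' j' (rc A hi hj a) =
      rc A (by omega) (by omega) (φ.toEquiv i j a) := by subst hi hj; rfl

theorem phi_mul {i j l : ℤ} (a : A.C i j) (b : A.C j l) :
    φ.toEquiv i l (A.mul a b) = A.mul (φ.toEquiv i j a) (φ.toEquiv j l b) :=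
  φ.map_mul a b

theorem phi_e (i : ℤ) : φ.toEquiv i i (A.e i) = A.e (i + 1) := φ.map_e i

theorem phisymm_mul {i j l : ℤ} (x : A.C (i+1) (j+1)) (y : A.C (j+1) (l+1)) :
    (φ.toEquiv i l).symm (A.mul x y) =
      A.mul ((φ.toEquiv i j).symm x) ((φ.toEquiv j l).symm y) := by
  apply (φ.toEquiv i l).injective
  rw [AddEquiv.apply_symm_apply, phi_mul φ, AddEquiv.apply_symm_apply,
    AddEquiv.apply_symm_apply]

theorem phisymm_e (i : ℤ) : (φ.toEquiv i i).symm (A.e (i+1)) = A.e i := by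
  rw [show A.e (i+1) = (A.shift 1).e i from rfl, ← φ.map_e i, AddEquiv.symm_apply_apply]

theorem phisymm_rc {i j i' j' : ℤ} (hi : i + 1 = i' + 1) (hj : j + 1 = j' + 1)
    (x : A.C (i+1) (j+1)) :
    (φ.toEquiv i' j').symm (rc A hi hj x) =
      rc A (by omega) (by omega) ((φ.toEquiv i j).symm x) := by
  have h1 : i = i' := by omega
  have h2 : j = j' := by omega
  subst h1 h2; rfl

/-- positive iterates of φ -/
def powF : (n : ℕ) → ∀ (i j i' j' : ℤ), i' = i + n → j' = j + n → A.C i j → A.C i' j'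
  | 0, _, _, _, _, hi, hj, a => rc A (by omega) (by omega) a
  | n+1, i, j, i', j', hi, hj, a =>
      rc A (by push_cast at hi ⊢; omega) (by push_cast at hj ⊢; omega)
        (φ.toEquiv (i + n) (j + n) (powF n i j (i+n) (j+n) rfl rfl a))

/-- negative iterates of φ -/
def npowF : (n : ℕ) → ∀ (i j i' j' : ℤ), i' = i - n → j' = j - n → A.C i j → A.C i' j'
  | 0, _, _, _, _, hi, hj, a => rc A (by omega) (by omega) a
  | n+1, i, j, i', j', hi, hj, a =>
      (φ.toEquiv i' j').symm
        (rc A (by push_cast at hi ⊢; omega) (by push_cast at hj ⊢; omega)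
          (npowF n i j (i - n) (j - n) rfl rfl a))

end ZP
namespace ZP

variable {A : ZAlg} (φ : ZAlgIso A (A.shift 1))

theorem powF_move (n : ℕ) (i j i1 j1 i2 j2 : ℤ) (h1 : i1 = i + n) (h1' : j1 = j + n)
    (h2 : i2 = i + n) (h2' : j2 = j + n) (p : i1 = i2) (q : j1 = j2) (a : A.C i j) :
    powF φ n i j i2 j2 h2 h2' a = rc A p q (powF φ n i j i1 j1 h1 h1' a) := by
  subst p q; rfl

theorem powF_rc (n : ℕ) (i j i' j' i0 j0 : ℤ) (hi : i' = i + n) (hj : j' = j + n)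
    (hi0 : i' = i0 + n) (hj0 : j' = j0 + n) (p : i0 = i) (q : j0 = j) (a : A.C i0 j0) :
    powF φ n i j i' j' hi hj (rc A p q a) = powF φ n i0 j0 i' j' hi0 hj0 a := by
  subst p q; rfl

theorem npowF_move (n : ℕ) (i j i1 j1 i2 j2 : ℤ) (h1 : i1 = i - n) (h1' : j1 = j - n)
    (h2 : i2 = i - n) (h2' : j2 = j - n) (p : i1 = i2) (q : j1 = j2) (a : A.C i j) :
    npowF φ n i j i2 j2 h2 h2' a = rc A p q (npowF φ n i j i1 j1 h1 h1' a) := by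
  subst p q; rfl

theorem npowF_rc (n : ℕ) (i j i' j' i0 j0 : ℤ) (hi : i' = i - n) (hj : j' = j - n)
    (hi0 : i' = i0 - n) (hj0 : j' = j0 - n) (p : i0 = i) (q : j0 = j) (a : A.C i0 j0) :
    npowF φ n i j i' j' hi hj (rc A p q a) = npowF φ n i0 j0 i' j' hi0 hj0 a := by
  subst p q; rfl

theorem powF_add (n : ℕ) : ∀ (i j i' j' : ℤ) (hi : i' = i + n) (hj : j' = j + n)
    (a b : A.C i j),
    powF φ n i j i' j' hi hj (a + b) =
      powF φ n i j i' j' hi hj a + powF φ n i j i' j' hi hj b := by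
  induction n with
  | zero => intro i j i' j' hi hj a b; simp only [powF]; exact rc_add A _ _ a b
  | succ n ih =>
      intro i j i' j' hi hj a b
      simp only [powF, ih, map_add, rc_add]

theorem npowF_add (n : ℕ) : ∀ (i j i' j' : ℤ) (hi : i' = i - n) (hj : j' = j - n)
    (a b : A.C i j),
    npowF φ n i j i' j' hi hj (a + b) =
      npowF φ n i j i' j' hi hj a + npowF φ n i j i' j' hi hj b := by
  induction n with
  | zero => intro i j i' j' hi hj a b; simp only [npowF]; exact rc_add A _ _ a b
  | succ n ih =>
      intro i j i' j' hi hj a b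
      simp only [npowF, ih, map_add, rc_add]

theorem powF_mul (n : ℕ) : ∀ (i k j i' k' j' : ℤ) (hi : i' = i + n) (hk hk2 : k' = k + n)
    (hj : j' = j + n) (a : A.C i k) (b : A.C k j),
    powF φ n i j i' j' hi hj (A.mul a b) =
      A.mul (powF φ n i k i' k' hi hk a) (powF φ n k j k' j' hk2 hj b) := by
  induction n with
  | zero =>
      intro i k j i' k' j' hi hk hk2 hj a b
      simp only [powF]
      rw [rc_mul]
  | succ n ih =>
      intro i k j i' k' j' hi hk hk2 hj a b
      simp only [powF]
      rw [ih _ _ _ _ (k + n) _ rfl rfl rfl rfl, phi_mul φ, rc_mul]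

theorem npowF_mul (n : ℕ) : ∀ (i k j i' k' j' : ℤ) (hi : i' = i - n) (hk hk2 : k' = k - n)
    (hj : j' = j - n) (a : A.C i k) (b : A.C k j),
    npowF φ n i j i' j' hi hj (A.mul a b) =
      A.mul (npowF φ n i k i' k' hi hk a) (npowF φ n k j k' j' hk2 hj b) := by
  induction n with
  | zero =>
      intro i k j i' k' j' hi hk hk2 hj a b
      simp only [npowF]
      rw [rc_mul]
  | succ n ih =>
      intro i k j i' k' j' hi hk hk2 hj a b
      simp only [npowF]
      rw [ih _ _ _ _ (k - n) _ rfl rfl rfl rfl, rc_mul A _ _ _ _ _ _ |>.symm]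
      · exact phisymm_mul φ _ _
      all_goals omega

theorem powF_e (n : ℕ) : ∀ (i i' : ℤ) (h h' : i' = i + n),
    powF φ n i i i' i' h h' (A.e i) = A.e i' := by
  induction n with
  | zero => intro i i' h h'; simp only [powF]; exact rc_e A _ _
  | succ n ih =>
      intro i i' h h'
      simp only [powF]
      rw [ih _ _ rfl rfl, phi_e φ, rc_e]

theorem npowF_e (n : ℕ) : ∀ (i i' : ℤ) (h h' : i' = i - n),
    npowF φ n i i i' i' h h' (A.e i) = A.e i' := by
  induction n with
  | zero => intro i i' h h'; simp only [npowF]; exact rc_e A _ _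
  | succ n ih =>
      intro i i' h h'
      simp only [npowF]
      rw [ih _ _ rfl rfl, rc_e A, phisymm_e φ]

end ZP
namespace ZP

variable {A : ZAlg} (φ : ZAlgIso A (A.shift 1))

theorem powF_cocycle (m : ℕ) : ∀ (n : ℕ) (i j i1 j1 i2 j2 : ℤ)
    (h1 : i1 = i + n) (h1' : j1 = j + n) (h2 : i2 = i1 + m) (h2' : j2 = j1 + m)
    (h3 : i2 = i + (n + m : ℕ)) (h3' : j2 = j + (n + m : ℕ)) (a : A.C i j),
    powF φ m i1 j1 i2 j2 h2 h2' (powF φ n i j i1 j1 h1 h1' a) =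
      powF φ (n + m) i j i2 j2 h3 h3' a := by
  induction m with
  | zero =>
      intro n i j i1 j1 i2 j2 h1 h1' h2 h2' h3 h3' a
      simp only [powF]
      exact (powF_move φ n i j i1 j1 i2 j2 h1 h1' (by omega) (by omega) (by omega)
        (by omega) a).symm
  | succ m ih =>
      intro n i j i1 j1 i2 j2 h1 h1' h2 h2' h3 h3' a
      simp only [powF]
      rw [ih n i j i1 j1 (i1 + m) (j1 + m) h1 h1' rfl rfl (by push_cast; omega)
        (by push_cast; omega),
        powF_move φ (n + m) i j (i + (n+m:ℕ)) (j + (n+m:ℕ)) (i1 + m) (j1 + m)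
          rfl rfl (by push_cast; omega) (by push_cast; omega)
          (by push_cast; omega) (by push_cast; omega),
        phi_rc φ, rc_rc]
      rfl

theorem npowF_cocycle (m : ℕ) : ∀ (n : ℕ) (i j i1 j1 i2 j2 : ℤ)
    (h1 : i1 = i - n) (h1' : j1 = j - n) (h2 : i2 = i1 - m) (h2' : j2 = j1 - m)
    (h3 : i2 = i - (n + m : ℕ)) (h3' : j2 = j - (n + m : ℕ)) (a : A.C i j),
    npowF φ m i1 j1 i2 j2 h2 h2' (npowF φ n i j i1 j1 h1 h1' a) =
      npowF φ (n + m) i j i2 j2 h3 h3' a := by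
  induction m with
  | zero =>
      intro n i j i1 j1 i2 j2 h1 h1' h2 h2' h3 h3' a
      simp only [npowF]
      exact (npowF_move φ n i j i1 j1 i2 j2 h1 h1' (by omega) (by omega) (by omega)
        (by omega) a).symm
  | succ m ih =>
      intro n i j i1 j1 i2 j2 h1 h1' h2 h2' h3 h3' a
      simp only [npowF]
      rw [ih n i j i1 j1 (i1 - m) (j1 - m) h1 h1' rfl rfl (by push_cast; omega)
        (by push_cast; omega),
        npowF_move φ (n + m) i j (i - (n+m:ℕ)) (j - (n+m:ℕ)) (i1 - m) (j1 - m)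
          rfl rfl (by push_cast; omega) (by push_cast; omega)
          (by push_cast; omega) (by push_cast; omega),
        rc_rc]
      rfl

theorem npowF_phi (n : ℕ) : ∀ (i j i' j' : ℤ)
    (h : i' + 1 = (i + 1) - n) (h' : j' + 1 = (j + 1) - n)
    (hi : i' = i - n) (hj : j' = j - n) (x : A.C i j),
    npowF φ n (i+1) (j+1) (i'+1) (j'+1) h h' (φ.toEquiv i j x) =
      φ.toEquiv i' j' (npowF φ n i j i' j' hi hj x) := by
  induction n with
  | zero =>
      intro i j i' j' h h' hi hj x
      simp only [npowF]
      rw [phi_rc φ]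
  | succ n ih =>
      intro i j i' j' h h' hi hj x
      simp only [npowF]
      rw [npowF_move φ n (i+1) (j+1) ((i - n : ℤ)+1) ((j - n : ℤ)+1)
          (i + 1 - n) (j + 1 - n) (by push_cast; omega) (by push_cast; omega)
          (by omega) (by omega) (by omega) (by omega),
        ih i j (i - n) (j - n) (by omega) (by omega) rfl rfl,
        rc_rc, phisymm_rc φ, AddEquiv.symm_apply_apply, AddEquiv.apply_symm_apply]

end ZP
namespace ZP

variable {A : ZAlg} (φ : ZAlgIso A (A.shift 1))

theorem npowF_powF (n : ℕ) : ∀ (i j i1 j1 i2 j2 : ℤ)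
    (h1 : i1 = i + n) (h1' : j1 = j + n) (h2 : i2 = i1 - n) (h2' : j2 = j1 - n)
    (p : i = i2) (q : j = j2) (a : A.C i j),
    npowF φ n i1 j1 i2 j2 h2 h2' (powF φ n i j i1 j1 h1 h1' a) = rc A p q a := by
  induction n with
  | zero =>
      intro i j i1 j1 i2 j2 h1 h1' h2 h2' p q a
      simp only [powF, npowF, rc_rc]
  | succ n ih =>
      intro i j i1 j1 i2 j2 h1 h1' h2 h2' p q a
      simp only [powF, npowF]
      rw [npowF_rc φ n i1 j1 (i1 - ↑n) (j1 - ↑n) (i + ↑n + 1) (j + ↑n + 1)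
          rfl rfl (by omega) (by omega) (by omega) (by omega),
        npowF_move φ n (i + ↑n + 1) (j + ↑n + 1) (i + 1) (j + 1) (i1 - ↑n) (j1 - ↑n)
          (by omega) (by omega) (by omega) (by omega) (by omega) (by omega),
        npowF_phi φ n (i + ↑n) (j + ↑n) i j (by omega) (by omega) (by omega) (by omega),
        ih i j (i + ↑n) (j + ↑n) i j rfl rfl (by omega) (by omega) rfl rfl,
        rc_rfl, rc_rc, phisymm_rc φ, AddEquiv.symm_apply_apply]

theorem npowF_inj (n : ℕ) : ∀ (i j i' j' : ℤ) (hi : i' = i - n) (hj : j' = j - n)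
    {a b : A.C i j}, npowF φ n i j i' j' hi hj a = npowF φ n i j i' j' hi hj b → a = b := by
  induction n with
  | zero =>
      intro i j i' j' hi hj a b h
      simp only [npowF] at h
      exact rc_inj A _ _ h
  | succ n ih =>
      intro i j i' j' hi hj a b h
      simp only [npowF] at h
      exact ih i j (i - ↑n) (j - ↑n) rfl rfl
        (rc_inj A _ _ ((φ.toEquiv i' j').symm.injective h))

theorem powF_npowF (n : ℕ) (i j i1 j1 i2 j2 : ℤ)
    (h1 : i1 = i - n) (h1' : j1 = j - n) (h2 : i2 = i1 + n) (h2' : j2 = j1 + n)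
    (p : i = i2) (q : j = j2) (a : A.C i j) :
    powF φ n i1 j1 i2 j2 h2 h2' (npowF φ n i j i1 j1 h1 h1' a) = rc A p q a := by
  apply npowF_inj φ n i2 j2 (i2 - n) (j2 - n) rfl rfl
  rw [npowF_powF φ n i1 j1 i2 j2 (i2 - n) (j2 - n) h2 h2' rfl rfl (by omega) (by omega),
    npowF_rc φ n i2 j2 (i2 - ↑n) (j2 - ↑n) i j rfl rfl (by omega) (by omega) p q,
    npowF_move φ n i j (i1) (j1) (i2 - ↑n) (j2 - ↑n) h1 h1' (by omega) (by omega)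
      (by omega) (by omega)]

end ZP
namespace ZP

variable {A : ZAlg} (φ : ZAlgIso A (A.shift 1))

/-- integer iterates of φ -/
def zF : (n : ℤ) → ∀ (i j i' j' : ℤ), i' = i + n → j' = j + n → A.C i j → A.C i' j'
  | .ofNat m, i, j, i', j', hi, hj, a => powF φ m i j i' j' hi hj a
  | .negSucc m, i, j, i', j', hi, hj, a =>
      npowF φ (m+1) i j i' j' (by rw [Int.negSucc_eq] at hi; omega)
        (by rw [Int.negSucc_eq] at hj; omega) a

theorem zF_congr {m n : ℤ} (h : m = n) (i j i' j' : ℤ) (hi : i' = i + m) (hj : j' = j + m)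
    (hi' : i' = i + n) (hj' : j' = j + n) (a : A.C i j) :
    zF φ m i j i' j' hi hj a = zF φ n i j i' j' hi' hj' a := by subst h; rfl

theorem zF_zero (i j i' j' : ℤ) (hi : i' = i + 0) (hj : j' = j + 0)
    (p : i = i') (q : j = j') (a : A.C i j) :
    zF φ 0 i j i' j' hi hj a = rc A p q a := by
  show powF φ 0 i j i' j' (by omega) (by omega) a = _
  simp only [powF]

theorem zF_move (n : ℤ) (i j i1 j1 i2 j2 : ℤ) (h1 : i1 = i + n) (h1' : j1 = j + n)
    (h2 : i2 = i + n) (h2' : j2 = j + n) (p : i1 = i2) (q : j1 = j2) (a : A.C i j) :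
    zF φ n i j i2 j2 h2 h2' a = rc A p q (zF φ n i j i1 j1 h1 h1' a) := by
  subst p q; rfl

theorem zF_rc (n : ℤ) (i j i' j' i0 j0 : ℤ) (hi : i' = i + n) (hj : j' = j + n)
    (hi0 : i' = i0 + n) (hj0 : j' = j0 + n) (p : i0 = i) (q : j0 = j) (a : A.C i0 j0) :
    zF φ n i j i' j' hi hj (rc A p q a) = zF φ n i0 j0 i' j' hi0 hj0 a := by
  subst p q; rfl

theorem zF_add (n : ℤ) (i j i' j' : ℤ) (hi : i' = i + n) (hj : j' = j + n)
    (a b : A.C i j) :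
    zF φ n i j i' j' hi hj (a + b) =
      zF φ n i j i' j' hi hj a + zF φ n i j i' j' hi hj b := by
  cases n with
  | ofNat m => exact powF_add φ m i j i' j' hi hj a b
  | negSucc m =>
      have hi2 := hi; have hj2 := hj
      rw [Int.negSucc_eq] at hi2 hj2
      exact npowF_add φ (m+1) i j i' j' (by omega) (by omega) a b

theorem zF_mul (n : ℤ) (i k j i' k' j' : ℤ) (hi : i' = i + n) (hk hk2 : k' = k + n)
    (hj : j' = j + n) (a : A.C i k) (b : A.C k j) :
    zF φ n i j i' j' hi hj (A.mul a b) =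
      A.mul (zF φ n i k i' k' hi hk a) (zF φ n k j k' j' hk2 hj b) := by
  cases n with
  | ofNat m => exact powF_mul φ m i k j i' k' j' hi hk hk2 hj a b
  | negSucc m =>
      have hi2 := hi; have hk3 := hk; have hj2 := hj
      rw [Int.negSucc_eq] at hi2 hk3 hj2
      exact npowF_mul φ (m+1) i k j i' k' j' (by omega) (by omega) (by omega)
        (by omega) a b

theorem zF_e (n : ℤ) (i i' : ℤ) (h h' : i' = i + n) :
    zF φ n i i i' i' h h' (A.e i) = A.e i' := by
  cases n with
  | ofNat m => exact powF_e φ m i i' h h'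
  | negSucc m =>
      have h2 := h
      rw [Int.negSucc_eq] at h2
      exact npowF_e φ (m+1) i i' (by omega) (by omega)

theorem zF_succ (n : ℤ) (i j i' j' : ℤ) (hi : i' = i + (n + 1)) (hj : j' = j + (n + 1))
    (h1 : i' - 1 = i + n) (h1' : j' - 1 = j + n)
    (p : i' - 1 + 1 = i') (q : j' - 1 + 1 = j') (a : A.C i j) :
    zF φ (n + 1) i j i' j' hi hj a =
      rc A p q (φ.toEquiv (i' - 1) (j' - 1) (zF φ n i j (i' - 1) (j' - 1) h1 h1' a)) := by
  cases n with
  | ofNat m =>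
      have hi2 := hi; have hj2 := hj
      rw [show Int.ofNat m = (m : ℤ) from rfl] at hi2 hj2
      show powF φ (m+1) i j i' j' (by omega) (by omega) a =
        rc A p q (φ.toEquiv (i'-1) (j'-1)
          (powF φ m i j (i'-1) (j'-1) (by omega) (by omega) a))
      simp only [powF]
      rw [powF_move φ m i j (i'-1) (j'-1) (i + ↑m) (j + ↑m) (by omega) (by omega)
        rfl rfl (by omega) (by omega), phi_rc φ, rc_rc]
  | negSucc m =>
      have hi2 := hi; have hj2 := hj
      rw [Int.negSucc_eq] at hi2 hj2
      cases m with
      | zero =>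
          show powF φ 0 i j i' j' (by omega) (by omega) a =
            rc A p q (φ.toEquiv (i'-1) (j'-1)
              (npowF φ (0+1) i j (i'-1) (j'-1) (by omega) (by omega) a))
          simp only [powF, npowF]
          rw [AddEquiv.apply_symm_apply, rc_rc, rc_rc]
      | succ m =>
          show npowF φ (m+1) i j i' j' (by omega) (by omega) a =
            rc A p q (φ.toEquiv (i'-1) (j'-1)
              (npowF φ ((m+1)+1) i j (i'-1) (j'-1) (by omega) (by omega) a))
          conv_rhs => rw [show npowF φ ((m+1)+1) i j (i'-1) (j'-1) (by omega) (by omega) a =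
            (φ.toEquiv (i'-1) (j'-1)).symm (rc A (by omega) (by omega)
              (npowF φ (m+1) i j (i - ↑(m+1)) (j - ↑(m+1)) (by push_cast; omega)
                (by push_cast; omega) a)) from rfl]
          rw [AddEquiv.apply_symm_apply, rc_rc]
          exact npowF_move φ (m+1) i j (i - ↑(m+1)) (j - ↑(m+1)) i' j'
            (by push_cast; omega) (by push_cast; omega) (by omega) (by omega)
            (by omega) (by omega) a

theorem zF_pred (n : ℤ) (i j i' j' : ℤ) (hi : i' = i + (n - 1)) (hj : j' = j + (n - 1))
    (h1 : i' + 1 = i + n) (h1' : j' + 1 = j + n) (a : A.C i j) :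
    zF φ (n - 1) i j i' j' hi hj a =
      (φ.toEquiv i' j').symm (zF φ n i j (i' + 1) (j' + 1) h1 h1' a) := by
  have := zF_succ φ (n-1) i j (i'+1) (j'+1) (by omega) (by omega) (by omega) (by omega)
    (by omega) (by omega) a
  rw [zF_congr φ (show n - 1 + 1 = n by omega) i j (i'+1) (j'+1) (by omega) (by omega)
    h1 h1'] at this
  rw [this, phisymm_rc φ, AddEquiv.symm_apply_apply]
  exact zF_move φ (n-1) i j (i'+1-1) (j'+1-1) i' j' (by omega) (by omega) hi hj
    (by omega) (by omega) a

end ZP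
namespace ZP

variable {A : ZAlg} (φ : ZAlgIso A (A.shift 1))

theorem zF_cocycle (m : ℤ) : ∀ (n : ℤ) (i j i1 j1 i2 j2 : ℤ)
    (h1 : i1 = i + n) (h1' : j1 = j + n) (h2 : i2 = i1 + m) (h2' : j2 = j1 + m)
    (h3 : i2 = i + (n + m)) (h3' : j2 = j + (n + m)) (a : A.C i j),
    zF φ m i1 j1 i2 j2 h2 h2' (zF φ n i j i1 j1 h1 h1' a) =
      zF φ (n + m) i j i2 j2 h3 h3' a := by
  induction m using Int.induction_on with
  | zero =>
      intro n i j i1 j1 i2 j2 h1 h1' h2 h2' h3 h3' a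
      rw [zF_zero φ i1 j1 i2 j2 h2 h2' (by omega) (by omega),
        zF_congr φ (show n + 0 = n by ring) i j i2 j2 h3 h3' (by omega) (by omega)]
      exact (zF_move φ n i j i1 j1 i2 j2 h1 h1' (by omega) (by omega) (by omega)
        (by omega) a).symm
  | succ k ih =>
      intro n i j i1 j1 i2 j2 h1 h1' h2 h2' h3 h3' a
      rw [zF_succ φ k i1 j1 i2 j2 h2 h2' (by omega) (by omega) (by omega) (by omega),
        ih n i j i1 j1 (i2-1) (j2-1) h1 h1' (by omega) (by omega) (by omega) (by omega),
        zF_congr φ (show n + (↑k + 1) = (n + k) + 1 by ring) i j i2 j2 h3 h3'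
          (by omega) (by omega),
        zF_succ φ (n + k) i j i2 j2 (by omega) (by omega) (by omega) (by omega)
          (by omega) (by omega)]
  | pred k ih =>
      intro n i j i1 j1 i2 j2 h1 h1' h2 h2' h3 h3' a
      rw [zF_pred φ (-(k:ℤ)) i1 j1 i2 j2 (by omega) (by omega) (by omega) (by omega),
        ih n i j i1 j1 (i2+1) (j2+1) h1 h1' (by omega) (by omega) (by omega) (by omega),
        zF_congr φ (show n + (-(k:ℤ) - 1) = (n + -(k:ℤ)) - 1 by ring) i j i2 j2 h3 h3'
          (by omega) (by omega),
        zF_pred φ (n + -(k:ℤ)) i j i2 j2 (by omega) (by omega) (by omega) (by omega)]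

/-- integer iterates of φ as additive equivalences -/
def zE (n i j i' j' : ℤ) (hi : i' = i + n) (hj : j' = j + n) : A.C i j ≃+ A.C i' j' where
  toFun := zF φ n i j i' j' hi hj
  invFun := zF φ (-n) i' j' i j (by omega) (by omega)
  left_inv a := by
    rw [zF_cocycle φ (-n) n i j i' j' i j hi hj (by omega) (by omega) (by omega) (by omega),
      zF_congr φ (show n + -n = 0 by ring) i j i j (by omega) (by omega) (by omega)
        (by omega),
      zF_zero φ i j i j (by omega) (by omega) rfl rfl]
    exact rc_rfl A rfl rfl a
  right_inv a := by
    rw [zF_cocycle φ n (-n) i' j' i j i' j' (by omega) (by omega) hi hj (by omega)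
        (by omega),
      zF_congr φ (show -n + n = 0 by ring) i' j' i' j' (by omega) (by omega) (by omega)
        (by omega),
      zF_zero φ i' j' i' j' (by omega) (by omega) rfl rfl]
    exact rc_rfl A rfl rfl a
  map_add' a b := zF_add φ n i j i' j' hi hj a b

/-- the graded ring built from a 1-periodic ℤ-algebra -/
def Bgr : GrRingData where
  C n := A.C 0 n
  addgrp n := A.addgrp 0 n
  mul {i j} a b := A.mul a (zF φ i 0 j i (i + j) (by omega) (by omega) b)
  one := A.e 0
  mul_add {i j} a b c := by
    show A.mul a (zF φ i 0 j i (i + j) (by omega) (by omega) (b + c)) = _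
    rw [zF_add φ i 0 j i (i+j) (by omega) (by omega) b c, A.mul_add]
  add_mul {i j} a b c := A.add_mul a b _
  mul_assoc {i j l} a b c := by
    have key : A.mul a (zF φ i 0 (j+l) i (i+(j+l)) (by omega) (by omega)
          (A.mul b (zF φ j 0 l j (j+l) (by omega) (by omega) c))) =
        rc A rfl (show i+j+l = i+(j+l) by ring)
          (A.mul (A.mul a (zF φ i 0 j i (i+j) (by omega) (by omega) b))
            (zF φ (i+j) 0 l (i+j) (i+j+l) (by omega) (by omega) c)) := by
      rw [zF_mul φ i 0 j (j+l) i (i+j) (i+(j+l)) (by omega) (by omega) (by omega)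
          (by omega) b (zF φ j 0 l j (j+l) (by omega) (by omega) c),
        zF_cocycle φ i j 0 l j (j+l) (i+j) (i+(j+l)) (by omega) (by omega) (by omega)
          (by omega) (by omega) (by omega) c,
        zF_congr φ (show j + i = i + j by ring) 0 l (i+j) (i+(j+l)) (by omega) (by omega)
          (by omega) (by omega) c,
        zF_move φ (i+j) 0 l (i+j) (i+j+l) (i+j) (i+(j+l)) (by omega) (by omega)
          (by omega) (by omega) rfl (by ring) c,
        mul_rc_right A, mul_rc_right A, ← A.mul_assoc]
    show HEq
      (A.mul (A.mul a (zF φ i 0 j i (i+j) (by omega) (by omega) b))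
        (zF φ (i+j) 0 l (i+j) (i+j+l) (by omega) (by omega) c))
      (A.mul a (zF φ i 0 (j+l) i (i+(j+l)) (by omega) (by omega)
        (A.mul b (zF φ j 0 l j (j+l) (by omega) (by omega) c))))
    rw [key]
    exact (heq_rc A rfl _ _).symm
  one_mul {i} a := by
    have key : A.mul (A.e 0) (zF φ 0 0 i 0 (0+i) (by omega) (by omega) a) =
        rc A rfl (show i = 0+i by omega) a := by
      rw [zF_zero φ 0 i 0 (0+i) (by omega) (by omega) rfl (by omega),
        mul_rc_right A rfl (show i = 0 + i by omega), A.e_mul]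
    show HEq (A.mul (A.e 0) (zF φ 0 0 i 0 (0+i) (by omega) (by omega) a)) a
    rw [key]
    exact heq_rc A rfl _ a
  mul_one {i} a := by
    have key : A.mul a (zF φ i 0 0 i (i+0) (by omega) (by omega) (A.e 0)) =
        rc A rfl (show i = i+0 by omega) a := by
      rw [zF_move φ i 0 0 i i i (i+0) (by omega) (by omega) (by omega) (by omega) rfl
          (show i = i+0 by omega),
        zF_e φ i 0 i (by omega) (by omega),
        mul_rc_right A rfl (show i = i + 0 by omega), A.mul_e]
    show HEq (A.mul a (zF φ i 0 0 i (i+0) (by omega) (by omega) (A.e 0))) a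
    rw [key]
    exact heq_rc A rfl _ a

end ZP
namespace ZP

variable {A : ZAlg} (φ : ZAlgIso A (A.shift 1))

/-- the isomorphism `B̌ ≅ A` -/
def psi : ZAlgIso (Bgr φ).check A where
  toEquiv i j := zE φ i 0 (j-i) i j (by omega) (by omega)
  map_mul {i j l} a b := by
    show zF φ i 0 (l-i) i l (by omega) (by omega)
        (rc A rfl (show (j-i) + (l-j) = l-i by ring)
          (A.mul a (zF φ (j-i) 0 (l-j) (j-i) ((j-i)+(l-j)) (by omega) (by omega) b))) =
      A.mul (zF φ i 0 (j-i) i j (by omega) (by omega) a)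
        (zF φ j 0 (l-j) j l (by omega) (by omega) b)
    rw [zF_rc φ i 0 (l-i) i l 0 ((j-i)+(l-j)) (by omega) (by omega) (by omega) (by omega)
        rfl (show (j-i)+(l-j) = l-i by ring),
      zF_mul φ i 0 (j-i) ((j-i)+(l-j)) i j l (by omega) (by omega) (by omega) (by omega)
        a (zF φ (j-i) 0 (l-j) (j-i) ((j-i)+(l-j)) (by omega) (by omega) b),
      zF_cocycle φ i (j-i) 0 (l-j) (j-i) ((j-i)+(l-j)) j l (by omega) (by omega)
        (by omega) (by omega) (by omega) (by omega) b,
      zF_congr φ (show (j-i) + i = j by ring) 0 (l-j) j l (by omega) (by omega)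
        (by omega) (by omega) b]
  map_e i := by
    show zF φ i 0 (i-i) i i (by omega) (by omega)
        (rc A rfl (show (0:ℤ) = i-i by ring) (A.e 0)) = A.e i
    rw [zF_rc φ i 0 (i-i) i i 0 0 (by omega) (by omega) (by omega) (by omega)
        rfl (show (0:ℤ) = i-i by ring),
      zF_e φ i 0 i (by omega) (by omega)]

end ZP


/-- every 1-periodic ℤ-algebra comes from a ℤ-graded ring.  If
`A ≅ A(1)`, then there is a ℤ-graded ring `B` with components `B_n = A_{0,n}` such that
`B̌ ≅ A` (the graded multiplication being `b_i · b_j = b_i φ^i(b_j)` and the isomorphism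
`ψ : B̌ → A` being `φ^i` on `B̌_{ij} = B_{j-i} = A_{0,j-i}`). -/
theorem one_periodic_ZAlgebra_comes_from_graded_ring
    (A : ZAlg) (hper : Nonempty (ZAlgIso A (A.shift 1))) :
    ∃ B : GrRingData, (∀ n : ℤ, B.C n = A.C 0 n) ∧ Nonempty (ZAlgIso (B.check) A) := by
  obtain ⟨φ⟩ := hper
  exact ⟨ZP.Bgr φ, fun n => rfl, ⟨ZP.psi φ⟩⟩
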